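/- arXiv:2010.05756 — 4 statements merged into one kernel-verified Lean document; each statement's English description precedes it below -/
import Mathlib

section
/- In a generalized group, for each element a the inverse a^{-1} is unique. -/
/-- A generalized group: an associative operation where each element has its own
unique two-sided identity `e a` and an inverse relative to it. -/
structure GenGroup (G : Type*) where
  mul : G → G → G
  e : G → G
  inv : G → G
  mul_assoc : ∀ a b c : G, mul (mul a b) c = mul a (mul b c)
  e_mul : ∀ a : G, mul (e a) a = a
  mul_e : ∀ a : G, mul a (e a) = a
  e_unique : ∀ a u : G, mul u a = a → mul a u = a → u = e a
  mul_inv : ∀ a : G, mul a (inv a) = e a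
  inv_mul : ∀ a : G, mul (inv a) a = e a

lemma genGroup_e_e {G : Type*} (GG : GenGroup G) (a : G) : GG.e (GG.e a) = GG.e a := by
  have h : GG.mul (GG.e a) (GG.e a) = GG.e a := by
    have := congrArg (fun t => GG.mul t (GG.e a)) (GG.e_mul a)
    simpa using GG.e_unique a (GG.mul (GG.e a) (GG.e a))
      (by rw [GG.mul_assoc, GG.e_mul, GG.e_mul])
      (by rw [← GG.mul_assoc, GG.mul_e, GG.mul_e])
  exact (GG.e_unique (GG.e a) (GG.e a) h h).symm

/-- If `x` is a two-sided inverse of `a` then `e x = e a`. -/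
lemma genGroup_e_of_inv {G : Type*} (GG : GenGroup G) (a x : G)
    (h1 : GG.mul a x = GG.e a) (h2 : GG.mul x a = GG.e a) : GG.e x = GG.e a := by
  have hl : GG.mul (GG.e x) (GG.e a) = GG.e a := by
    have := congrArg (fun t => GG.mul t a) (GG.e_mul x)
    simpa [GG.mul_assoc, h2] using this
  have hr : GG.mul (GG.e a) (GG.e x) = GG.e a := by
    have := congrArg (fun t => GG.mul a t) (GG.mul_e x)
    simpa [← GG.mul_assoc, h1] using this
  have := GG.e_unique (GG.e a) (GG.e x) hl hr
  rw [this, genGroup_e_e]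

/-- In a generalized group, for each element `a` the inverse is unique. -/
theorem genGroup_inv_unique {G : Type*} [Nonempty G] (GG : GenGroup G) (a b : G)
    (h1 : GG.mul a b = GG.e a) (h2 : GG.mul b a = GG.e a) :
    b = GG.inv a := by
  have hb : GG.e b = GG.e a := genGroup_e_of_inv GG a b h1 h2
  have hi : GG.e (GG.inv a) = GG.e a :=
    genGroup_e_of_inv GG a (GG.inv a) (GG.mul_inv a) (GG.inv_mul a)
  calc b = GG.mul b (GG.e b) := (GG.mul_e b).symm
    _ = GG.mul b (GG.mul a (GG.inv a)) := by rw [hb, GG.mul_inv]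
    _ = GG.mul (GG.mul b a) (GG.inv a) := (GG.mul_assoc _ _ _).symm
    _ = GG.mul (GG.e (GG.inv a)) (GG.inv a) := by rw [h2, hi]
    _ = GG.inv a := GG.e_mul _
end

section
/- In a generalized group, every element a and its inverse a^{-1} have the same identity element, i.e., e(a^{-1}) = e(a). -/
/-- In a generalized group, an element and its inverse have the same identity. -/
theorem genGroup_e_inv {G : Type*} [Nonempty G] (GG : GenGroup G) (a : G) :
    GG.e (GG.inv a) = GG.e a := by
  -- e (inv a) is a two-sided identity for e a
  have h1 : GG.mul (GG.e (GG.inv a)) (GG.e a) = GG.e a := by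
    calc GG.mul (GG.e (GG.inv a)) (GG.e a)
        = GG.mul (GG.e (GG.inv a)) (GG.mul (GG.inv a) a) := by rw [GG.inv_mul]
      _ = GG.mul (GG.mul (GG.e (GG.inv a)) (GG.inv a)) a := by rw [GG.mul_assoc]
      _ = GG.mul (GG.inv a) a := by rw [GG.e_mul]
      _ = GG.e a := GG.inv_mul a
  have h2 : GG.mul (GG.e a) (GG.e (GG.inv a)) = GG.e a := by
    calc GG.mul (GG.e a) (GG.e (GG.inv a))
        = GG.mul (GG.mul a (GG.inv a)) (GG.e (GG.inv a)) := by rw [GG.mul_inv]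
      _ = GG.mul a (GG.mul (GG.inv a) (GG.e (GG.inv a))) := by rw [GG.mul_assoc]
      _ = GG.mul a (GG.inv a) := by rw [GG.mul_e]
      _ = GG.e a := GG.mul_inv a
  -- e a is also a two-sided identity for itself
  have h3 : GG.mul (GG.e a) (GG.e a) = GG.e a := by
    calc GG.mul (GG.e a) (GG.e a)
        = GG.mul (GG.e a) (GG.mul a (GG.inv a)) := by rw [GG.mul_inv]
      _ = GG.mul (GG.mul (GG.e a) a) (GG.inv a) := by rw [GG.mul_assoc]
      _ = GG.mul a (GG.inv a) := by rw [GG.e_mul]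
      _ = GG.e a := GG.mul_inv a
  have ha : GG.e (GG.inv a) = GG.e (GG.e a) := GG.e_unique _ _ h1 h2
  have hb : GG.e a = GG.e (GG.e a) := GG.e_unique _ _ h3 h3
  rw [ha, ← hb]
end

section
/- Every abelian generalized group is a group, i.e., if the binary operation of a generalized group G is commutative, then there is a single two-sided identity element for all of G and every element has an inverse with respect to it. -/
lemma genGroup_e_mul_left {G : Type*} (GG : GenGroup G)
    (hcomm : ∀ a b : G, GG.mul a b = GG.mul b a) (a b : G) :
    GG.e a = GG.e (GG.mul a b) := by
  apply GG.e_unique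
  · rw [← GG.mul_assoc, GG.e_mul]
  · rw [hcomm a b, GG.mul_assoc, GG.mul_e]

lemma genGroup_e_const {G : Type*} (GG : GenGroup G)
    (hcomm : ∀ a b : G, GG.mul a b = GG.mul b a) (a b : G) :
    GG.e a = GG.e b := by
  rw [genGroup_e_mul_left GG hcomm a b, genGroup_e_mul_left GG hcomm b a,
    hcomm a b]

/-- Every abelian generalized group is a group: there is a single two-sided
identity for all of `G` and every element is invertible with respect to it. -/
theorem abelian_genGroup_is_group {G : Type*} [Nonempty G] (GG : GenGroup G)
    (hcomm : ∀ a b : G, GG.mul a b = GG.mul b a) :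
    ∃ one : G, (∀ a : G, GG.mul a one = a ∧ GG.mul one a = a) ∧
      (∀ a : G, ∃ b : G, GG.mul a b = one ∧ GG.mul b a = one) := by
  obtain ⟨x⟩ := ‹Nonempty G›
  refine ⟨GG.e x, fun a => ?_, fun a => ⟨GG.inv a, ?_, ?_⟩⟩
  · rw [genGroup_e_const GG hcomm x a]
    exact ⟨GG.mul_e a, GG.e_mul a⟩
  · rw [GG.mul_inv, genGroup_e_const GG hcomm a x]
  · rw [GG.inv_mul, genGroup_e_const GG hcomm a x]
end

section
/- Let G be a connected groupoid and suppose for each pair of objects a, b a morphism h_{ab} ∈ G(a,b) is chosen such that h_{ba} = h_{ab}^{-1} and h_{aa} = 1_a. Then G with the operation f + g = f ∘ h_{b c} ∘ g (for f: a → b, g: c → d) is a generalized group, in which e(f) = h_{ab} and -f = h_{ab} ∘ f^{-1} ∘ h_{ab} for f: a → b. -/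
open CategoryTheory in
/-- A connected groupoid `C` with a chosen morphism `h a b : a ⟶ b` for each pair of
objects, satisfying `h b a = (h a b)⁻¹` and `h a a = 𝟙 a`, is a generalized group
on its set of morphisms under `f + g = f ≫ h b c ≫ g` (for `f : a ⟶ b`, `g : c ⟶ d`),
with `e f = h a b` and `-f = h a b ≫ f⁻¹ ≫ h a b` for `f : a ⟶ b`. -/
theorem connected_groupoid_genGroup {C : Type*} [Groupoid C]
    (h : ∀ a b : C, a ⟶ b)
    (hinv : ∀ a b : C, h b a = Groupoid.inv (h a b))
    (hid : ∀ a : C, h a a = 𝟙 a) :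
    ∃ GG : GenGroup (Σ a b : C, a ⟶ b),
      (∀ (a b c d : C) (f : a ⟶ b) (g : c ⟶ d),
        GG.mul ⟨a, b, f⟩ ⟨c, d, g⟩ = ⟨a, d, f ≫ h b c ≫ g⟩) ∧
      (∀ (a b : C) (f : a ⟶ b), GG.e ⟨a, b, f⟩ = ⟨a, b, h a b⟩) ∧
      (∀ (a b : C) (f : a ⟶ b),
        GG.inv ⟨a, b, f⟩ = ⟨a, b, h a b ≫ Groupoid.inv f ≫ h a b⟩) := by
  refine ⟨{
    mul := fun x y => ⟨x.1, y.2.1, x.2.2 ≫ h x.2.1 y.1 ≫ y.2.2⟩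
    e := fun x => ⟨x.1, x.2.1, h x.1 x.2.1⟩
    inv := fun x => ⟨x.1, x.2.1, h x.1 x.2.1 ≫ Groupoid.inv x.2.2 ≫ h x.1 x.2.1⟩
    mul_assoc := ?_
    e_mul := ?_
    mul_e := ?_
    e_unique := ?_
    mul_inv := ?_
    inv_mul := ?_ }, fun a b c d f g => rfl, fun a b f => rfl, fun a b f => rfl⟩
  · rintro ⟨a, b, f⟩ ⟨c, d, g⟩ ⟨p, q, k⟩
    simp
  · rintro ⟨a, b, f⟩
    simp [hinv a b, Groupoid.inv_eq_inv]
  · rintro ⟨a, b, f⟩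
    simp [hinv a b, Groupoid.inv_eq_inv]
  · rintro ⟨p, q, f⟩ ⟨x, y, u⟩ h1 h2
    dsimp only at h1 h2
    have hx : x = p := congrArg Sigma.fst h1
    subst hx
    have hy : y = q := by
      have := congrArg (fun z => (Sigma.snd z).fst) h2
      simpa using this
    subst hy
    have h1' : u ≫ h y x ≫ f = f := by
      simpa [Sigma.mk.inj_iff] using h1
    have huu : u ≫ h y x = 𝟙 x := by
      rw [← Category.assoc] at h1'
      exact (cancel_mono f).mp (by simpa using h1')
    have : u = h x y := by
      calc u = u ≫ h y x ≫ h x y := by simp [hinv x y, Groupoid.inv_eq_inv]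
      _ = (u ≫ h y x) ≫ h x y := by simp
      _ = h x y := by rw [huu]; simp
    simp [this]
  · rintro ⟨a, b, f⟩
    simp [hinv a b, Groupoid.inv_eq_inv]
  · rintro ⟨a, b, f⟩
    simp [hinv a b, Groupoid.inv_eq_inv]
end
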